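/- arXiv:1410.3402 — 2 statements merged into one kernel-verified Lean document; each statement's English description precedes it below -/
import Mathlib

section
/- Let E ⊆ ℝⁿ be measurable, j,k ∈ {1,…,n}, and 0 < α < 1. Let M_j denote the directional maximal operator in the j-th coordinate direction. Define E_α := {x : M_k(1_E)(x) > α}. Then pointwise M_j M_k (1_E)(x) ≤ M_j(1_{E_α} + α·1_{E_α^c})(x) for every x ∈ ℝⁿ. -/
open MeasureTheory Set
open scoped ENNReal NNReal

/-- The directional maximal operator in the `j`-th coordinate direction on `ℝⁿ`. -/
noncomputable def Mdir {n : ℕ} (j : Fin n) (f : (Fin n → ℝ) → ℝ) (x : Fin n → ℝ) : ℝ :=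
  sSup {r : ℝ | ∃ s t : ℝ, s < x j ∧ x j < t ∧
    r = (t - s)⁻¹ * ∫ u in Set.Ioo s t, |f (Function.update x j u)|}

section Aux

variable {n : ℕ}

lemma aux_intOn {f : ℝ → ℝ} (hf : Measurable f) (h1 : ∀ u, |f u| ≤ 1)
    {s : Set ℝ} (hs : volume s < ⊤) : IntegrableOn f s volume := by
  refine Integrable.mono'
    ((integrableOn_const hs.ne) : IntegrableOn (fun _ => (1:ℝ)) s volume)
    hf.aestronglyMeasurable (Filter.Eventually.of_forall fun u => ?_)
  simpa [Real.norm_eq_abs] using h1 u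

lemma hInd_nonneg (E : Set (Fin n → ℝ)) (y : Fin n → ℝ) :
    0 ≤ E.indicator (1 : (Fin n → ℝ) → ℝ) y :=
  Set.indicator_nonneg (fun _ _ => by norm_num) y

lemma hInd_bound (E : Set (Fin n → ℝ)) (y : Fin n → ℝ) :
    |E.indicator (1 : (Fin n → ℝ) → ℝ) y| ≤ 1 := by
  classical
  rw [Set.indicator_apply]; split_ifs <;> norm_num

lemma vol_Ioo_lt_top (s t : ℝ) : volume (Ioo s t) < ⊤ := by
  rw [Real.volume_Ioo]; exact ENNReal.ofReal_lt_top

lemma integral_one_Ioo {s t : ℝ} (h : s ≤ t) : (∫ _u in Ioo s t, (1:ℝ)) = t - s := by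
  rw [setIntegral_const, measureReal_def, Real.volume_Ioo, smul_eq_mul, mul_one,
    ENNReal.toReal_ofReal (sub_nonneg.2 h)]

lemma elt_le_one {f : (Fin n → ℝ) → ℝ} (hb : ∀ y, |f y| ≤ 1) (x : Fin n → ℝ) (j : Fin n)
    {s t : ℝ} (hst : s < t) :
    (t - s)⁻¹ * ∫ u in Ioo s t, |f (Function.update x j u)| ≤ 1 := by
  have hts : (0:ℝ) < t - s := sub_pos.2 hst
  have h1 : (∫ u in Ioo s t, |f (Function.update x j u)|) ≤ ∫ _u in Ioo s t, (1:ℝ) :=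
    integral_mono_of_nonneg (Filter.Eventually.of_forall fun u => abs_nonneg _)
      (integrableOn_const (vol_Ioo_lt_top s t).ne)
      (Filter.Eventually.of_forall fun u => hb _)
  rw [integral_one_Ioo hst.le] at h1
  calc (t - s)⁻¹ * ∫ u in Ioo s t, |f (Function.update x j u)|
      ≤ (t - s)⁻¹ * (t - s) := mul_le_mul_of_nonneg_left h1 (inv_nonneg.2 hts.le)
    _ = 1 := inv_mul_cancel₀ hts.ne'

lemma mdir_bddAbove {f : (Fin n → ℝ) → ℝ} (hb : ∀ y, |f y| ≤ 1) (j : Fin n) (x : Fin n → ℝ) :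
    BddAbove {r : ℝ | ∃ s t : ℝ, s < x j ∧ x j < t ∧
      r = (t - s)⁻¹ * ∫ u in Set.Ioo s t, |f (Function.update x j u)|} := by
  refine ⟨1, ?_⟩
  rintro r ⟨s, t, hs, ht, rfl⟩
  exact elt_le_one hb x j (hs.trans ht)

lemma mdir_nonempty (f : (Fin n → ℝ) → ℝ) (j : Fin n) (x : Fin n → ℝ) :
    Set.Nonempty {r : ℝ | ∃ s t : ℝ, s < x j ∧ x j < t ∧
      r = (t - s)⁻¹ * ∫ u in Set.Ioo s t, |f (Function.update x j u)|} :=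
  ⟨_, x j - 1, x j + 1, by linarith, by linarith, rfl⟩

lemma Mdir_le_one {f : (Fin n → ℝ) → ℝ} (hb : ∀ y, |f y| ≤ 1) (j : Fin n) (x : Fin n → ℝ) :
    Mdir j f x ≤ 1 := by
  unfold Mdir
  refine csSup_le (mdir_nonempty f j x) ?_
  rintro r ⟨s, t, hs, ht, rfl⟩
  exact elt_le_one hb x j (hs.trans ht)

lemma Mdir_nonneg {f : (Fin n → ℝ) → ℝ} (hb : ∀ y, |f y| ≤ 1) (j : Fin n) (x : Fin n → ℝ) :
    0 ≤ Mdir j f x := by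
  unfold Mdir
  refine le_trans ?_ (le_csSup (mdir_bddAbove hb j x)
    ⟨x j - 1, x j + 1, by linarith, by linarith, rfl⟩)
  exact mul_nonneg (inv_nonneg.2 (by norm_num)) (integral_nonneg fun u => abs_nonneg _)

/-- averages of the indicator, without absolute values -/
noncomputable def avg (E : Set (Fin n → ℝ)) (k : Fin n) (z : Fin n → ℝ) (a b : ℝ) : ℝ :=
  (b - a)⁻¹ * ∫ u in Ioo a b, E.indicator 1 (Function.update z k u)

lemma avg_eq_abs (E : Set (Fin n → ℝ)) (k : Fin n) (z : Fin n → ℝ) (a b : ℝ) :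
    avg E k z a b = (b - a)⁻¹ * ∫ u in Ioo a b,
      |E.indicator (1 : (Fin n → ℝ) → ℝ) (Function.update z k u)| := by
  unfold avg
  simp only [fun w => abs_of_nonneg (hInd_nonneg E w)]

lemma Mdir_ind_eq (E : Set (Fin n → ℝ)) (k : Fin n) (z : Fin n → ℝ) :
    Mdir k (E.indicator 1) z =
      sSup {r : ℝ | ∃ s t : ℝ, s < z k ∧ z k < t ∧ r = avg E k z s t} := by
  unfold Mdir avg
  congr 1
  simp only [fun w => abs_of_nonneg (hInd_nonneg E w)]

lemma avg_le_one (E : Set (Fin n → ℝ)) (k : Fin n) (z : Fin n → ℝ) {a b : ℝ} (hab : a < b) :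
    avg E k z a b ≤ 1 := by
  rw [avg_eq_abs]; exact elt_le_one (hInd_bound E) z k hab

lemma avg_nonneg' (E : Set (Fin n → ℝ)) (k : Fin n) (z : Fin n → ℝ) {a b : ℝ} (hab : a ≤ b) :
    0 ≤ avg E k z a b :=
  mul_nonneg (inv_nonneg.2 (sub_nonneg.2 hab)) (integral_nonneg fun u => hInd_nonneg E _)

lemma avgSet_bddAbove (E : Set (Fin n → ℝ)) (k : Fin n) (z : Fin n → ℝ) :
    BddAbove {r : ℝ | ∃ s t : ℝ, s < z k ∧ z k < t ∧ r = avg E k z s t} := by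
  refine ⟨1, ?_⟩
  rintro r ⟨s, t, hs, ht, rfl⟩
  exact avg_le_one E k z (hs.trans ht)

lemma psi_meas {E : Set (Fin n → ℝ)} (hE : MeasurableSet E) (k : Fin n) (z : Fin n → ℝ) :
    Measurable fun u : ℝ => E.indicator (1 : (Fin n → ℝ) → ℝ) (Function.update z k u) :=
  (measurable_one.indicator hE).comp (measurable_update z)

lemma psi_ii {E : Set (Fin n → ℝ)} (hE : MeasurableSet E) (k : Fin n) (z : Fin n → ℝ)
    (a b : ℝ) :
    IntervalIntegrable (fun u : ℝ => E.indicator (1 : (Fin n → ℝ) → ℝ) (Function.update z k u))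
      volume a b := by
  rw [intervalIntegrable_iff]
  refine aux_intOn (psi_meas hE k z) (fun u => hInd_bound E _) ?_
  have : Set.uIoc a b = Ioc (min a b) (max a b) := rfl
  rw [this, Real.volume_Ioc]
  exact ENNReal.ofReal_lt_top

lemma lt_Mdir_iff {E : Set (Fin n → ℝ)} (hE : MeasurableSet E) (k : Fin n) (z : Fin n → ℝ)
    (β : ℝ) :
    β < Mdir k (E.indicator 1) z ↔
      ∃ q1 q2 : ℚ, (q1 : ℝ) < z k ∧ z k < (q2 : ℝ) ∧ β < avg E k z q1 q2 := by
  rw [Mdir_ind_eq]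
  constructor
  · intro h
    have hne : Set.Nonempty {r : ℝ | ∃ s t : ℝ, s < z k ∧ z k < t ∧ r = avg E k z s t} :=
      ⟨_, z k - 1, z k + 1, by linarith, by linarith, rfl⟩
    obtain ⟨r, ⟨s, t, hs, ht, rfl⟩, hβr⟩ := exists_lt_of_lt_csSup hne h
    have hst : s < t := hs.trans ht
    have hts : (0:ℝ) < t - s := sub_pos.2 hst
    set ψ : ℝ → ℝ := fun u => E.indicator (1 : (Fin n → ℝ) → ℝ) (Function.update z k u) with hψ
    set ε : ℝ := avg E k z s t - β with hε
    have hε0 : 0 < ε := sub_pos.2 hβr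
    set δ : ℝ := ε * (t - s) / 4 with hδ
    have hδ0 : 0 < δ := by positivity
    obtain ⟨q1, hq1a, hq1b⟩ := exists_rat_btwn (show s < min (s + δ) (z k) from
      lt_min (by linarith) hs)
    obtain ⟨q2, hq2a, hq2b⟩ := exists_rat_btwn (show max (t - δ) (z k) < t from
      max_lt (by linarith) ht)
    have hq1zk : (q1 : ℝ) < z k := (lt_min_iff.1 hq1b).2
    have hq1δ : (q1 : ℝ) < s + δ := (lt_min_iff.1 hq1b).1
    have hq2zk : z k < (q2 : ℝ) := (max_lt_iff.1 hq2a).2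
    have hq2δ : t - δ < (q2 : ℝ) := (max_lt_iff.1 hq2a).1
    have hq12 : (q1 : ℝ) < q2 := hq1zk.trans hq2zk
    refine ⟨q1, q2, hq1zk, hq2zk, ?_⟩
    -- integral comparisons
    have hIoo : ∀ a b : ℝ, a ≤ b → (∫ u in Ioo a b, ψ u) = ∫ u in a..b, ψ u := by
      intro a b hab
      rw [intervalIntegral.integral_of_le hab, integral_Ioc_eq_integral_Ioo]
    have hseg : ∀ a b : ℝ, a ≤ b → (∫ u in a..b, ψ u) ≤ b - a := by
      intro a b hab
      have h1 : (∫ u in a..b, ψ u) ≤ ∫ _u in a..b, (1:ℝ) :=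
        intervalIntegral.integral_mono_on hab (psi_ii hE k z a b) intervalIntegrable_const
          (fun u _ => le_of_abs_le (hInd_bound E _))
      simpa using h1
    have hnn : ∀ a b : ℝ, a ≤ b → 0 ≤ ∫ u in a..b, ψ u := by
      intro a b hab
      exact intervalIntegral.integral_nonneg hab (fun u _ => hInd_nonneg E _)
    have hadd1 : (∫ u in (q1:ℝ)..q2, ψ u) + (∫ u in (q2:ℝ)..t, ψ u) = ∫ u in (q1:ℝ)..t, ψ u :=
      intervalIntegral.integral_add_adjacent_intervals (psi_ii hE k z _ _) (psi_ii hE k z _ _)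
    have hadd2 : (∫ u in s..(q1:ℝ), ψ u) + (∫ u in (q1:ℝ)..t, ψ u) = ∫ u in s..t, ψ u :=
      intervalIntegral.integral_add_adjacent_intervals (psi_ii hE k z _ _) (psi_ii hE k z _ _)
    have hb1 : (∫ u in s..(q1:ℝ), ψ u) ≤ δ := by
      have := hseg s q1 (by linarith)
      linarith
    have hb3 : (∫ u in (q2:ℝ)..t, ψ u) ≤ δ := by
      have := hseg q2 t (by linarith)
      linarith
    have ha2 : 0 ≤ ∫ u in (q1:ℝ)..q2, ψ u := hnn q1 q2 hq12.le
    -- rewrite avg in terms of interval integrals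
    have havgst : avg E k z s t = (t - s)⁻¹ * ∫ u in s..t, ψ u := by
      rw [avg, ← hIoo s t hst.le]
    have havgq : avg E k z q1 q2 = ((q2:ℝ) - q1)⁻¹ * ∫ u in (q1:ℝ)..q2, ψ u := by
      rw [avg, ← hIoo q1 q2 hq12.le]
    have hmono : ((t:ℝ) - s)⁻¹ * (∫ u in (q1:ℝ)..q2, ψ u) ≤ avg E k z q1 q2 := by
      rw [havgq]
      refine mul_le_mul_of_nonneg_right ?_ ha2
      refine inv_anti₀ (by linarith) (by linarith)
    have hkey : avg E k z s t ≤ (t - s)⁻¹ * (∫ u in (q1:ℝ)..q2, ψ u) + ε / 2 := by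
      have hJ : (∫ u in s..t, ψ u) ≤ (∫ u in (q1:ℝ)..q2, ψ u) + 2 * δ := by linarith
      have h2 : (t - s)⁻¹ * (∫ u in s..t, ψ u) ≤
          (t - s)⁻¹ * ((∫ u in (q1:ℝ)..q2, ψ u) + 2 * δ) :=
        mul_le_mul_of_nonneg_left hJ (inv_nonneg.2 hts.le)
      have h3 : (t - s)⁻¹ * (2 * δ) = ε / 2 := by
        rw [hδ]
        field_simp
        ring
      rw [havgst]
      calc (t - s)⁻¹ * ∫ u in s..t, ψ u
          ≤ (t - s)⁻¹ * ((∫ u in (q1:ℝ)..q2, ψ u) + 2 * δ) := h2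
        _ = (t - s)⁻¹ * (∫ u in (q1:ℝ)..q2, ψ u) + (t - s)⁻¹ * (2 * δ) := by ring
        _ = (t - s)⁻¹ * (∫ u in (q1:ℝ)..q2, ψ u) + ε / 2 := by rw [h3]
    linarith
  · rintro ⟨q1, q2, h1, h2, h3⟩
    exact h3.trans_le (le_csSup (avgSet_bddAbove E k z) ⟨q1, q2, h1, h2, rfl⟩)

lemma measSet {E : Set (Fin n → ℝ)} (hE : MeasurableSet E) (j k : Fin n) (x : Fin n → ℝ)
    (α : ℝ) :
    MeasurableSet {u : ℝ | α < Mdir k (E.indicator 1) (Function.update x j u)} := by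
  have hrw : {u : ℝ | α < Mdir k (E.indicator 1) (Function.update x j u)} =
      ⋃ (q1 : ℚ) (q2 : ℚ),
        ({u : ℝ | (q1 : ℝ) < Function.update x j u k} ∩
          {u : ℝ | Function.update x j u k < (q2 : ℝ)} ∩
          {u : ℝ | α < avg E k (Function.update x j u) q1 q2}) := by
    ext u
    simp only [mem_setOf_eq, mem_iUnion, mem_inter_iff, lt_Mdir_iff hE]
    tauto
  rw [hrw]
  refine MeasurableSet.iUnion fun q1 => MeasurableSet.iUnion fun q2 => ?_
  have hcoord : Measurable fun u : ℝ => Function.update x j u k := by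
    simp only [Function.update_apply]
    split_ifs
    · exact measurable_id
    · exact measurable_const
  have havg : Measurable fun u : ℝ => avg E k (Function.update x j u) (q1 : ℝ) (q2 : ℝ) := by
    have hmap : Measurable fun p : ℝ × ℝ =>
        Function.update (Function.update x j p.1) k p.2 := by
      refine measurable_pi_lambda _ fun i => ?_
      simp only [Function.update_apply]
      split_ifs
      · exact measurable_snd
      · exact measurable_fst
      · exact measurable_const
    have hpair : Measurable fun p : ℝ × ℝ =>
        E.indicator (1 : (Fin n → ℝ) → ℝ) (Function.update (Function.update x j p.1) k p.2) :=
      (measurable_one.indicator hE).comp hmap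
    have hint : Measurable fun u : ℝ => ∫ v in Ioo (q1 : ℝ) (q2 : ℝ),
        E.indicator (1 : (Fin n → ℝ) → ℝ) (Function.update (Function.update x j u) k v) :=
      hpair.stronglyMeasurable.integral_prod_right'.measurable
    exact measurable_const.mul hint
  exact ((measurableSet_lt measurable_const hcoord).inter
    (measurableSet_lt hcoord measurable_const)).inter
    (measurableSet_lt measurable_const havg)

lemma Mdir_mono_aux {f g : (Fin n → ℝ) → ℝ} (j : Fin n) (x : Fin n → ℝ)
    (hfg : ∀ y, |f y| ≤ |g y|) (hgb : ∀ y, |g y| ≤ 1)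
    (hgint : ∀ s t : ℝ, IntegrableOn (fun u => |g (Function.update x j u)|) (Ioo s t) volume) :
    Mdir j f x ≤ Mdir j g x := by
  unfold Mdir
  refine csSup_le (mdir_nonempty f j x) ?_
  rintro r ⟨s, t, hs, ht, rfl⟩
  refine le_trans ?_ (le_csSup (mdir_bddAbove hgb j x) ⟨s, t, hs, ht, rfl⟩)
  refine mul_le_mul_of_nonneg_left ?_ (inv_nonneg.2 (sub_nonneg.2 (hs.trans ht).le))
  exact integral_mono_of_nonneg (Filter.Eventually.of_forall fun u => abs_nonneg _)
    (hgint s t) (Filter.Eventually.of_forall fun u => hfg _)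

end Aux

/-- pointwise domination of compositions of directional maximal operators. -/
theorem stmt15 {n : ℕ} (E : Set (Fin n → ℝ)) (hE : MeasurableSet E)
    (j k : Fin n) (α : ℝ) (hα0 : 0 < α) (hα1 : α < 1) (x : Fin n → ℝ) :
    Mdir j (Mdir k (E.indicator 1)) x ≤
      Mdir j (fun y =>
        Set.indicator {z | α < Mdir k (E.indicator 1) z} 1 y +
          α * Set.indicator {z | α < Mdir k (E.indicator 1) z}ᶜ 1 y) x := by
  classical
  set F : (Fin n → ℝ) → ℝ := Mdir k (E.indicator 1) with hF
  set G : (Fin n → ℝ) → ℝ := fun y =>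
    Set.indicator {z | α < Mdir k (E.indicator 1) z} 1 y +
      α * Set.indicator {z | α < Mdir k (E.indicator 1) z}ᶜ 1 y with hG
  have hGval : ∀ y, G y = if α < F y then (1:ℝ) else α := by
    intro y
    by_cases hy : α < F y
    · have hy' : y ∈ {z | α < Mdir k (E.indicator 1) z} := hy
      simp [hG, Set.indicator_apply, hy', hy, show α < Mdir k (E.indicator 1) y from hy,
        not_le.2 (show α < Mdir k (E.indicator 1) y from hy)]
    · have hy' : y ∉ {z | α < Mdir k (E.indicator 1) z} := hy
      simp [hG, Set.indicator_apply, hy', hy, show ¬ α < Mdir k (E.indicator 1) y from hy,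
        not_lt.1 (show ¬ α < Mdir k (E.indicator 1) y from hy)]
  have hGpos : ∀ y, 0 < G y := by
    intro y; rw [hGval]; split_ifs <;> linarith
  have hGb : ∀ y, |G y| ≤ 1 := by
    intro y
    rw [abs_of_nonneg (hGpos y).le, hGval]
    split_ifs <;> linarith
  have hFnn : ∀ y, 0 ≤ F y := fun y => Mdir_nonneg (hInd_bound E) k y
  have hFG : ∀ y, |F y| ≤ |G y| := by
    intro y
    rw [abs_of_nonneg (hFnn y), abs_of_nonneg (hGpos y).le, hGval]
    split_ifs with h
    · exact Mdir_le_one (hInd_bound E) k y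
    · exact not_lt.1 h
  have hGint : ∀ s t : ℝ, IntegrableOn (fun u => |G (Function.update x j u)|)
      (Ioo s t) volume := by
    intro s t
    have hGm : Measurable fun u : ℝ => G (Function.update x j u) := by
      have : (fun u : ℝ => G (Function.update x j u)) =
          fun u : ℝ => if α < F (Function.update x j u) then (1:ℝ) else α := by
        funext u; exact hGval _
      rw [this]
      exact Measurable.ite (measSet hE j k x α) measurable_const measurable_const
    refine aux_intOn hGm.abs (fun u => ?_) (vol_Ioo_lt_top s t)
    rw [abs_abs]
    exact hGb _
  exact Mdir_mono_aux j x hFG hGb hGint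
end

section
/- Let w be a weight on ℝ satisfying the property that for every interval I and measurable E ⊆ I, w(E)/w(I) ≤ 2 (|E|/|I|)^{1/β} for some β ≥ 1 (as holds for A_∞ weights with β = 4[w]_{A_∞}). Let {I_k}_k be a finite collection of intervals with Σ_k 1_{I_k} ≤ 2 pointwise, and suppose each I_k satisfies |I_k ∩ E^c|/|I_k| ≤ η for some measurable set E and η ∈ (0,1). Then w(∪_k I_k) ≤ w(E) + 4 η^{1/β} w(∪_k I_k); in particular, if 4η^{1/β} < 1, then w(∪_k I_k) ≤ (1 - 4η^{1/β})^{-1} w(E). -/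
open MeasureTheory Set
open scoped ENNReal NNReal

/-- absorption estimate for a family of intervals with overlap at
most `2`, each almost covered by `E`. -/
theorem stmt19 (w : ℝ → ℝ) (hw : ∀ x, 0 ≤ w x) (hmeas : Measurable w)
    (hloc : LocallyIntegrable w volume) (β : ℝ) (hβ : 1 ≤ β)
    (habs : ∀ a b : ℝ, a < b → ∀ F ⊆ Set.Ioo a b, MeasurableSet F →
      (∫⁻ x in F, ENNReal.ofReal (w x)) ≤
        ENNReal.ofReal (2 * ((volume F).toReal / (b - a)) ^ (1 / β)) *
          ∫⁻ x in Set.Ioo a b, ENNReal.ofReal (w x))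
    (N : ℕ) (a b : Fin N → ℝ) (hab : ∀ k, a k < b k)
    (hoverlap : ∀ x : ℝ,
      (∑ k : Fin N, Set.indicator (Set.Ioo (a k) (b k)) (fun _ => (1 : ℝ)) x) ≤ 2)
    (E : Set ℝ) (hE : MeasurableSet E) (η : ℝ) (hη0 : 0 < η) (hη1 : η < 1)
    (hcov : ∀ k : Fin N,
      volume (Set.Ioo (a k) (b k) ∩ Eᶜ) ≤
        ENNReal.ofReal η * volume (Set.Ioo (a k) (b k))) :
    (∫⁻ x in ⋃ k, Set.Ioo (a k) (b k), ENNReal.ofReal (w x)) ≤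
      (∫⁻ x in E, ENNReal.ofReal (w x)) +
        ENNReal.ofReal (4 * η ^ (1 / β)) *
          ∫⁻ x in ⋃ k, Set.Ioo (a k) (b k), ENNReal.ofReal (w x) ∧
    (4 * η ^ (1 / β) < 1 →
      (∫⁻ x in ⋃ k, Set.Ioo (a k) (b k), ENNReal.ofReal (w x)) ≤
        ENNReal.ofReal ((1 - 4 * η ^ (1 / β))⁻¹) *
          ∫⁻ x in E, ENNReal.ofReal (w x)) := by
  classical
  set ν : Measure ℝ := volume.withDensity (fun x => ENNReal.ofReal (w x)) with hν
  have hwm : Measurable fun x => ENNReal.ofReal (w x) := hmeas.ennreal_ofReal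
  have hνapp : ∀ s : Set ℝ, MeasurableSet s →
      (∫⁻ x in s, ENNReal.ofReal (w x)) = ν s := fun s hs =>
    (withDensity_apply _ hs).symm
  set U : Set ℝ := ⋃ k, Set.Ioo (a k) (b k) with hU
  have hUopen : IsOpen U := isOpen_iUnion fun k => isOpen_Ioo
  have hUm : MeasurableSet U := hUopen.measurableSet
  -- finiteness of ν U
  have hνUlt : ν U < ⊤ := by
    have hK : IsCompact (⋃ k, Set.Icc (a k) (b k)) :=
      isCompact_iUnion fun k => isCompact_Icc
    have hint := (hloc.integrableOn_isCompact hK).2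
    have heq : ∀ x, ENNReal.ofReal (w x) = (‖w x‖₊ : ℝ≥0∞) := by
      intro x
      rw [← enorm_eq_nnnorm, ← ofReal_norm, Real.norm_of_nonneg (hw x)]
    have h1 : ν U ≤ ν (⋃ k, Set.Icc (a k) (b k)) :=
      measure_mono (Set.iUnion_mono fun k => Set.Ioo_subset_Icc_self)
    have h2 : ν (⋃ k, Set.Icc (a k) (b k)) < ⊤ := by
      rw [← hνapp _ (MeasurableSet.iUnion fun k => measurableSet_Icc)]
      simp only [heq]
      exact hint
    exact lt_of_le_of_lt h1 h2
  -- overlap estimate : ∑ ν I_k ≤ 2 * ν U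
  have hsum : (∑ k : Fin N, ν (Set.Ioo (a k) (b k))) ≤ 2 * ν U := by
    have key : ∀ x : ℝ,
        (∑ k : Fin N, (Set.Ioo (a k) (b k)).indicator (1 : ℝ → ℝ≥0∞) x)
          ≤ 2 * U.indicator (1 : ℝ → ℝ≥0∞) x := by
      intro x
      by_cases hx : x ∈ U
      · have h1 : ∀ k : Fin N,
            (Set.Ioo (a k) (b k)).indicator (1 : ℝ → ℝ≥0∞) x =
              ENNReal.ofReal
                ((Set.Ioo (a k) (b k)).indicator (fun _ => (1 : ℝ)) x) := by
          intro k
          by_cases h : x ∈ Set.Ioo (a k) (b k) <;> simp [h]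
        simp only [h1]
        rw [← ENNReal.ofReal_sum_of_nonneg (fun k _ =>
          Set.indicator_nonneg (fun _ _ => zero_le_one) x)]
        calc ENNReal.ofReal _ ≤ ENNReal.ofReal 2 :=
              ENNReal.ofReal_le_ofReal (hoverlap x)
          _ = 2 * U.indicator (1 : ℝ → ℝ≥0∞) x := by
              simp [Set.indicator_of_mem hx, ENNReal.ofReal_ofNat]
      · have h0 : ∀ k : Fin N, x ∉ Set.Ioo (a k) (b k) := by
          intro k hk
          exact hx (Set.mem_iUnion.2 ⟨k, hk⟩)
        simp [Set.indicator_of_notMem, h0, Set.indicator_of_notMem hx]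
    calc (∑ k : Fin N, ν (Set.Ioo (a k) (b k)))
        = ∑ k : Fin N, ∫⁻ x, (Set.Ioo (a k) (b k)).indicator
            (1 : ℝ → ℝ≥0∞) x ∂ν := by
          refine Finset.sum_congr rfl fun k _ => ?_
          rw [lintegral_indicator_one measurableSet_Ioo]
      _ = ∫⁻ x, (∑ k : Fin N, (Set.Ioo (a k) (b k)).indicator
            (1 : ℝ → ℝ≥0∞) x) ∂ν := by
          rw [lintegral_finset_sum]
          exact fun k _ => measurable_const.indicator measurableSet_Ioo
      _ ≤ ∫⁻ x, 2 * U.indicator (1 : ℝ → ℝ≥0∞) x ∂ν := lintegral_mono key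
      _ = 2 * ν U := by
          rw [lintegral_const_mul' _ _ (by norm_num : (2:ℝ≥0∞) ≠ ⊤),
            lintegral_indicator_one hUm]
  -- per interval estimate
  have hper : ∀ k : Fin N, ν (Set.Ioo (a k) (b k) ∩ Eᶜ) ≤
      ENNReal.ofReal (2 * η ^ (1 / β)) * ν (Set.Ioo (a k) (b k)) := by
    intro k
    have hFm : MeasurableSet (Set.Ioo (a k) (b k) ∩ Eᶜ) :=
      measurableSet_Ioo.inter hE.compl
    have hsub : Set.Ioo (a k) (b k) ∩ Eᶜ ⊆ Set.Ioo (a k) (b k) :=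
      Set.inter_subset_left
    have h1 := habs (a k) (b k) (hab k) _ hsub hFm
    rw [hνapp _ hFm, hνapp _ measurableSet_Ioo] at h1
    refine h1.trans (mul_le_mul_left (ENNReal.ofReal_le_ofReal ?_) _)
    have hba : (0 : ℝ) < b k - a k := sub_pos.2 (hab k)
    have hr : (volume (Set.Ioo (a k) (b k) ∩ Eᶜ)).toReal / (b k - a k) ≤ η := by
      rw [div_le_iff₀ hba]
      have hfin : volume (Set.Ioo (a k) (b k) ∩ Eᶜ) ≠ ⊤ := by
        refine ne_top_of_le_ne_top ?_ (measure_mono hsub)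
        rw [Real.volume_Ioo]; exact ENNReal.ofReal_ne_top
      have := (hcov k)
      rw [Real.volume_Ioo, ← ENNReal.ofReal_mul hη0.le] at this
      have := ENNReal.toReal_mono ENNReal.ofReal_ne_top this
      rwa [ENNReal.toReal_ofReal (by positivity)] at this
    have h0r : (0:ℝ) ≤ (volume (Set.Ioo (a k) (b k) ∩ Eᶜ)).toReal / (b k - a k) :=
      div_nonneg ENNReal.toReal_nonneg hba.le
    have := Real.rpow_le_rpow h0r hr (by positivity : (0:ℝ) ≤ 1/β)
    nlinarith [Real.rpow_nonneg h0r (1/β)]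
  -- main inequality
  have hmain : ν U ≤ ν E + ENNReal.ofReal (4 * η ^ (1 / β)) * ν U := by
    have hsplit : ν U = ν (U ∩ E) + ν (U \ E) := (measure_inter_add_diff U hE).symm
    have h2 : ν (U \ E) ≤ ∑ k : Fin N, ν (Set.Ioo (a k) (b k) ∩ Eᶜ) := by
      have : U \ E = ⋃ k, (Set.Ioo (a k) (b k) ∩ Eᶜ) := by
        rw [Set.diff_eq, hU, Set.iUnion_inter]
      rw [this]
      exact (measure_iUnion_fintype_le _ _)
    have h3 : (∑ k : Fin N, ν (Set.Ioo (a k) (b k) ∩ Eᶜ)) ≤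
        ENNReal.ofReal (4 * η ^ (1 / β)) * ν U := by
      calc (∑ k : Fin N, ν (Set.Ioo (a k) (b k) ∩ Eᶜ))
          ≤ ∑ k : Fin N, ENNReal.ofReal (2 * η ^ (1 / β)) *
              ν (Set.Ioo (a k) (b k)) := Finset.sum_le_sum fun k _ => hper k
        _ = ENNReal.ofReal (2 * η ^ (1 / β)) *
              ∑ k : Fin N, ν (Set.Ioo (a k) (b k)) := by
            rw [Finset.mul_sum]
        _ ≤ ENNReal.ofReal (2 * η ^ (1 / β)) * (2 * ν U) :=
            mul_le_mul_right hsum _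
        _ = ENNReal.ofReal (4 * η ^ (1 / β)) * ν U := by
            rw [← mul_assoc]
            congr 1
            rw [show (2:ℝ≥0∞) = ENNReal.ofReal 2 by simp [ENNReal.ofReal_ofNat],
              ← ENNReal.ofReal_mul (by positivity)]
            ring_nf
    calc ν U = ν (U ∩ E) + ν (U \ E) := hsplit
      _ ≤ ν E + ENNReal.ofReal (4 * η ^ (1 / β)) * ν U :=
        add_le_add (measure_mono Set.inter_subset_right) (h2.trans h3)
  rw [hνapp _ hUm, hνapp _ hE]
  refine ⟨hmain, fun h4 => ?_⟩
  -- absorption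
  set c : ℝ := 4 * η ^ (1 / β) with hc
  have hc0 : 0 < c := by positivity
  have h1c : 0 < 1 - c := by linarith
  have hkey : ENNReal.ofReal (1 - c) * ν U ≤ ν E := by
    have : ENNReal.ofReal (1 - c) * ν U = ν U - ENNReal.ofReal c * ν U := by
      rw [ENNReal.ofReal_sub _ hc0.le, ENNReal.ofReal_one,
        ENNReal.sub_mul (fun _ _ => hνUlt.ne), one_mul]
    rw [this]
    exact tsub_le_iff_right.2 hmain
  calc ν U = ENNReal.ofReal ((1 - c)⁻¹) * (ENNReal.ofReal (1 - c) * ν U) := by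
        rw [← mul_assoc, ← ENNReal.ofReal_mul (by positivity),
          inv_mul_cancel₀ h1c.ne', ENNReal.ofReal_one, one_mul]
    _ ≤ ENNReal.ofReal ((1 - c)⁻¹) * ν E := mul_le_mul_right hkey _
end
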